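/- Let f : [-1,1] → ℝ be continuous and strictly convex on [m, m+δ₀], differentiable at m, with m ∈ (-1,1). Define R(a,b) := (f(m+a)−f(m+b))/(a−b) for a ≠ b and R(a,a) := f'(m+a), and C(a,b) := (|a−b|/2)(f(m+a)+f(m+b)) − |∫_{m+b}^{m+a} f(v) dv| appropriately signed, i.e. for a > b, C(a,b) := ((a−b)/2)(f(m+a)+f(m+b)) − ∫_{m+b}^{m+a} f(v) dv. If additionally f ∈ C²([-1,1]), then lim_{δ₁↓0} lim_{δ₂↓0} lim_{δ↓0} sup_{δ',δ'' ∈ [−δ,δ]} (|C(δ₁,δ')| + |C(δ'',−δ₂)| + |C(δ₁,−δ₂)|) / (R(δ₁,0) − f'(m)) = 0. -/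

import Mathlib

set_option maxHeartbeats 1000000

open Set

/-- the key triple limit in the proof of Lemma 6. For `f ∈ C²([-1,1])`
strictly convex on `[m,m+δ₀]` with derivative `fm` at `m`, setting
`R(δ₁,0) := (f(m+δ₁)−f(m))/δ₁` and
`C(a,b) := ((a−b)/2)(f(m+a)+f(m+b)) − ∫_{m+b}^{m+a} f(v) dv`, one has
`lim_{δ₁↓0} lim_{δ₂↓0} lim_{δ↓0} sup_{a,b ∈ [−δ,δ]}
  (|C(δ₁,a)| + |C(b,−δ₂)| + |C(δ₁,−δ₂)|) / (R(δ₁,0) − fm) = 0`,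
expressed in `ε`–`δ` form. -/
theorem key_triple_limit
    (f : ℝ → ℝ) (m δ₀ : ℝ) (hm : m ∈ Ioo (-1:ℝ) 1) (hδ₀ : 0 < δ₀)
    (hsub : Icc (m - δ₀) (m + δ₀) ⊆ Ioo (-1:ℝ) 1)
    (hf : ContDiffOn ℝ 2 f (Icc (-1) 1))
    (hconv : StrictConvexOn ℝ (Icc m (m + δ₀)) f)
    (fm : ℝ) (hfm : HasDerivAt f fm m) :
    ∀ ε > (0:ℝ), ∃ d₁ > (0:ℝ), ∀ δ₁, 0 < δ₁ → δ₁ < d₁ → δ₁ ≤ δ₀ →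
      ∃ d₂ > (0:ℝ), ∀ δ₂, 0 < δ₂ → δ₂ < d₂ →
        ∃ d₃ > (0:ℝ), ∀ δ, 0 < δ → δ < d₃ →
          ∀ a ∈ Icc (-δ) δ, ∀ b ∈ Icc (-δ) δ,
            (|((δ₁ - a) / 2) * (f (m + δ₁) + f (m + a)) - ∫ v in (m + a)..(m + δ₁), f v| +
             |((b + δ₂) / 2) * (f (m + b) + f (m - δ₂)) - ∫ v in (m - δ₂)..(m + b), f v| +
             |((δ₁ + δ₂) / 2) * (f (m + δ₁) + f (m - δ₂)) - ∫ v in (m - δ₂)..(m + δ₁), f v|)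
              / ((f (m + δ₁) - f m) / δ₁ - fm) < ε := by
  -- basic membership facts
  have hm1 : m ∈ Icc (-1:ℝ) 1 := ⟨hm.1.le, hm.2.le⟩
  have hmem : ∀ t : ℝ, |t| ≤ δ₀ → m + t ∈ Icc (-1:ℝ) 1 := by
    intro t ht
    have h := abs_le.mp ht
    have : m + t ∈ Icc (m - δ₀) (m + δ₀) := ⟨by linarith [h.1], by linarith [h.2]⟩
    exact ⟨(hsub this).1.le, (hsub this).2.le⟩
  have hc : ContinuousOn f (Icc (-1:ℝ) 1) := hf.continuousOn
  -- bound on |f|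
  obtain ⟨B, hB⟩ := isCompact_Icc.exists_bound_of_continuousOn hc
  have hB' : ∀ x ∈ Icc (-1:ℝ) 1, |f x| ≤ B := by
    intro x hx; simpa [Real.norm_eq_abs] using hB x hx
  have hB0 : 0 ≤ B := le_trans (abs_nonneg _) (hB' m hm1)
  -- Lipschitz bound
  have hudiff : UniqueDiffOn ℝ (Icc (-1:ℝ) 1) := uniqueDiffOn_Icc (by norm_num)
  have hdiff : DifferentiableOn ℝ f (Icc (-1:ℝ) 1) := hf.differentiableOn two_ne_zero
  have hdc : ContinuousOn (derivWithin f (Icc (-1:ℝ) 1)) (Icc (-1:ℝ) 1) :=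
    hf.continuousOn_derivWithin hudiff one_le_two
  obtain ⟨L, hL⟩ := isCompact_Icc.exists_bound_of_continuousOn hdc
  have hL0 : 0 ≤ L := le_trans (norm_nonneg _) (hL m hm1)
  have hLip : ∀ x ∈ Icc (-1:ℝ) 1, ∀ y ∈ Icc (-1:ℝ) 1, |f y - f x| ≤ L * |y - x| := by
    intro x hx y hy
    have := (convex_Icc (-1:ℝ) 1).norm_image_sub_le_of_norm_derivWithin_le hdiff hL hx hy
    simpa [Real.norm_eq_abs] using this
  -- integrability
  have hInt : ∀ x ∈ Icc (-1:ℝ) 1, ∀ y ∈ Icc (-1:ℝ) 1, IntervalIntegrable f MeasureTheory.volume x y := by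
    intro x hx y hy
    apply ContinuousOn.intervalIntegrable
    apply hc.mono
    intro z hz
    rcases mem_uIcc.mp hz with ⟨h1, h2⟩ | ⟨h1, h2⟩ <;>
      exact ⟨by linarith [hx.1, hy.1], by linarith [hx.2, hy.2]⟩
  -- crude integral bound
  have hIB : ∀ x ∈ Icc (-1:ℝ) 1, ∀ y ∈ Icc (-1:ℝ) 1, |∫ v in x..y, f v| ≤ B * |y - x| := by
    intro x hx y hy
    have h : ∀ z ∈ Set.uIoc x y, ‖f z‖ ≤ B := by
      intro z hz
      rcases Set.mem_uIoc.mp hz with ⟨h1, h2⟩ | ⟨h1, h2⟩ <;>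
        exact hB z ⟨by linarith [hx.1, hy.1], by linarith [hx.2, hy.2]⟩
    simpa [Real.norm_eq_abs] using intervalIntegral.norm_integral_le_of_norm_le_const h
  -- integral of affine functions
  have hlin : ∀ (c k x y : ℝ), (∫ v in x..y, (c + k * (v - m))) =
      (c * y + k * (y - m) ^ 2 / 2) - (c * x + k * (x - m) ^ 2 / 2) := by
    intro c k x y
    have hF : ∀ v : ℝ, HasDerivAt (fun u => c * u + k * (u - m) ^ 2 / 2) (c + k * (v - m)) v := by
      intro v
      have h1 : HasDerivAt (fun u : ℝ => u - m) 1 v := (hasDerivAt_id v).sub_const m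
      have h2 := h1.pow 2
      have h3 := ((hasDerivAt_id v).const_mul c).add ((h2.const_mul k).div_const 2)
      refine h3.congr_deriv ?_
      norm_num; ring
    rw [intervalIntegral.integral_eq_sub_of_hasDerivAt (fun v _ => hF v)
      (Continuous.intervalIntegrable (by fun_prop) _ _)]
  -- supporting line: slope above derivative
  have hslope : Filter.Tendsto (slope f m) (nhdsWithin m (Set.Ioi m)) (nhds fm) := by
    have h := hasDerivAt_iff_tendsto_slope.mp hfm
    exact h.mono_left (nhdsWithin_mono m (fun z hz => by
      simp only [mem_compl_iff, mem_singleton_iff]; exact ne_of_gt hz))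
  have hsupp : ∀ t : ℝ, 0 < t → t ≤ δ₀ → fm ≤ (f (m + t) - f m) / t := by
    intro t ht htδ
    have hmt : m + t ∈ Icc m (m + δ₀) := ⟨by linarith, by linarith⟩
    have hms : m ∈ Icc m (m + δ₀) := ⟨le_refl m, by linarith⟩
    have hev : ∀ᶠ z in nhdsWithin m (Set.Ioi m), slope f m z ≤ (f (m + t) - f m) / t := by
      filter_upwards [Ioo_mem_nhdsGT_of_mem (⟨le_refl m, by linarith⟩ : m ∈ Ico m (m + t))]
        with z hz
      have hzs : z ∈ Icc m (m + δ₀) := ⟨hz.1.le, by linarith [hz.2]⟩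
      have := hconv.convexOn.secant_mono hms hzs hmt (ne_of_gt hz.1) (by intro h; nlinarith)
        (le_of_lt hz.2)
      rw [slope_def_field]
      simpa using this
    exact le_of_tendsto hslope hev
  have hsuppt : ∀ t : ℝ, 0 ≤ t → t ≤ δ₀ → f m + fm * t ≤ f (m + t) := by
    intro t ht htδ
    rcases eq_or_lt_of_le ht with h | h
    · simp [← h]
    · have := hsupp t h htδ
      have h2 := (le_div_iff₀ h).mp this
      linarith
  -- main proof
  intro ε hε
  obtain ⟨K, hK_def⟩ : ∃ K : ℝ, K = 2 * B + L + 1 := ⟨_, rfl⟩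
  have hK : 0 < K := by rw [hK_def]; positivity
  refine ⟨min 1 (ε / 3), by positivity, ?_⟩
  intro δ₁ hδ₁ hδ₁d hδ₁δ₀
  have hδ₁1 : δ₁ ≤ 1 := le_of_lt (lt_of_lt_of_le hδ₁d (min_le_left _ _))
  have hδ₁ε : δ₁ < ε / 3 := lt_of_lt_of_le hδ₁d (min_le_right _ _)
  obtain ⟨D, hD_def⟩ : ∃ D : ℝ, D = (f (m + δ₁) - f m) / δ₁ - fm := ⟨_, rfl⟩
  -- positivity of the denominator
  have hD : 0 < D := by
    have hms : m ∈ Icc m (m + δ₀) := ⟨le_refl m, by linarith⟩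
    have hx : m + δ₁ / 2 ∈ Icc m (m + δ₀) := ⟨by linarith, by linarith⟩
    have hy : m + δ₁ ∈ Icc m (m + δ₀) := ⟨by linarith, by linarith⟩
    have hstrict := hconv.secant_strict_mono hms hx hy (by intro h; nlinarith)
      (by intro h; nlinarith) (by linarith)
    have h1 : fm ≤ (f (m + δ₁ / 2) - f m) / (δ₁ / 2) := by
      have := hsupp (δ₁ / 2) (by linarith) (by linarith)
      simpa using this
    have h2 : (f (m + δ₁ / 2) - f m) / (m + δ₁ / 2 - m) < (f (m + δ₁) - f m) / (m + δ₁ - m) :=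
      hstrict
    rw [show m + δ₁ / 2 - m = δ₁ / 2 by ring, show m + δ₁ - m = δ₁ by ring] at h2
    rw [hD_def]; linarith
  obtain ⟨C₀, hC₀_def⟩ : ∃ C₀ : ℝ,
    C₀ = δ₁ / 2 * (f (m + δ₁) + f m) - ∫ v in m..(m + δ₁), f v := ⟨_, rfl⟩
  have hmδ₁ : m + δ₁ ∈ Icc (-1:ℝ) 1 := hmem δ₁ (by rw [abs_of_pos hδ₁]; exact hδ₁δ₀)
  -- upper bound on C₀ via supporting line
  have hC₀u : C₀ ≤ D * δ₁ ^ 2 / 2 := by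
    have hmono : (∫ v in m..(m + δ₁), (f m + fm * (v - m))) ≤ ∫ v in m..(m + δ₁), f v := by
      apply intervalIntegral.integral_mono_on (by linarith)
      · exact Continuous.intervalIntegrable (by fun_prop) _ _
      · exact hInt m hm1 (m + δ₁) hmδ₁
      · intro v hv
        have h := hsuppt (v - m) (by linarith [hv.1]) (by linarith [hv.2])
        rw [show m + (v - m) = v by ring] at h
        exact h
    have hval : (∫ v in m..(m + δ₁), (f m + fm * (v - m))) = f m * δ₁ + fm * δ₁ ^ 2 / 2 := by
      rw [hlin]; ring
    rw [hval] at hmono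
    have hDδ : D * δ₁ = f (m + δ₁) - f m - fm * δ₁ := by
      rw [hD_def]; field_simp
    have hkey : C₀ - D * δ₁ ^ 2 / 2
        = (f m * δ₁ + fm * δ₁ ^ 2 / 2) - ∫ v in m..(m + δ₁), f v := by
      rw [hC₀_def]; linear_combination (-(δ₁ / 2)) * hDδ
    linarith [hmono, hkey.le, hkey.ge]
  -- lower bound on C₀ via convexity (chord above graph)
  have hC₀l : 0 ≤ C₀ := by
    set s : ℝ := (f (m + δ₁) - f m) / δ₁ with hs_def
    have hsδ : s * δ₁ = f (m + δ₁) - f m := div_mul_cancel₀ _ (ne_of_gt hδ₁)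
    have hmono : (∫ v in m..(m + δ₁), f v) ≤ ∫ v in m..(m + δ₁), (f m + s * (v - m)) := by
      apply intervalIntegral.integral_mono_on (by linarith)
      · exact hInt m hm1 (m + δ₁) hmδ₁
      · exact Continuous.intervalIntegrable (by fun_prop) _ _
      · intro v hv
        set t : ℝ := (v - m) / δ₁ with ht_def
        have ht0 : 0 ≤ t := div_nonneg (by linarith [hv.1]) hδ₁.le
        have ht1 : t ≤ 1 := by
          rw [ht_def, div_le_one hδ₁]; linarith [hv.2]
        have htδ : t * δ₁ = v - m := div_mul_cancel₀ _ (ne_of_gt hδ₁)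
        have hms : m ∈ Icc m (m + δ₀) := ⟨le_refl m, by linarith⟩
        have hy : m + δ₁ ∈ Icc m (m + δ₀) := ⟨by linarith, by linarith⟩
        have hcv := hconv.convexOn.2 hms hy (by linarith : (0:ℝ) ≤ 1 - t) ht0 (by ring)
        simp only [smul_eq_mul] at hcv
        rw [show (1 - t) * m + t * (m + δ₁) = v by nlinarith] at hcv
        have hsv : s * (v - m) = t * (f (m + δ₁) - f m) := by rw [← htδ, ← hsδ]; ring
        linarith [hcv]
    have hval : (∫ v in m..(m + δ₁), (f m + s * (v - m))) = f m * δ₁ + s * δ₁ ^ 2 / 2 := by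
      rw [hlin]; ring
    rw [hval] at hmono
    have hs2 : s * δ₁ ^ 2 / 2 = (f (m + δ₁) - f m) * δ₁ / 2 := by rw [← hsδ]; ring
    rw [hC₀_def]
    linarith [hmono]
  -- key bound: trapezoid cost with one endpoint perturbed
  have keybound : ∀ t : ℝ, |t| ≤ δ₀ →
      |((δ₁ - t) / 2) * (f (m + δ₁) + f (m + t)) - ∫ v in (m + t)..(m + δ₁), f v|
        ≤ C₀ + K * |t| := by
    intro t ht
    have hmt : m + t ∈ Icc (-1:ℝ) 1 := hmem t ht
    have hsplit : (∫ v in (m + t)..(m + δ₁), f v)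
        = (∫ v in (m + t)..m, f v) + ∫ v in m..(m + δ₁), f v :=
      (intervalIntegral.integral_add_adjacent_intervals (hInt (m + t) hmt m hm1)
        (hInt m hm1 (m + δ₁) hmδ₁)).symm
    set Etr : ℝ := (δ₁ * (f (m + t) - f m) - t * (f (m + δ₁) + f (m + t))) / 2 with hEtr_def
    set Eint : ℝ := -(∫ v in (m + t)..m, f v) with hEint_def
    have hdecomp : ((δ₁ - t) / 2) * (f (m + δ₁) + f (m + t)) - (∫ v in (m + t)..(m + δ₁), f v)
        = C₀ + Etr + Eint := by
      rw [hsplit, hC₀_def, hEtr_def, hEint_def]; ring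
    rw [hdecomp]
    have hEintB : |Eint| ≤ B * |t| := by
      rw [hEint_def, abs_neg]
      have := hIB (m + t) hmt m hm1
      rw [show m - (m + t) = -t by ring, abs_neg] at this
      exact this
    have hEtrB : |Etr| ≤ (L + 2 * B) / 2 * |t| := by
      rw [hEtr_def]
      rw [abs_div, abs_of_pos (by norm_num : (0:ℝ) < 2)]
      have h1 : |f (m + t) - f m| ≤ L * |t| := by
        have := hLip m hm1 (m + t) hmt
        rw [show m + t - m = t by ring] at this
        exact this
      have h2 : |f (m + δ₁)| ≤ B := hB' _ hmδ₁
      have h3 : |f (m + t)| ≤ B := hB' _ hmt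
      have h4 : |δ₁ * (f (m + t) - f m) - t * (f (m + δ₁) + f (m + t))|
          ≤ δ₁ * |f (m + t) - f m| + |t| * |f (m + δ₁) + f (m + t)| := by
        calc |δ₁ * (f (m + t) - f m) - t * (f (m + δ₁) + f (m + t))|
            ≤ |δ₁ * (f (m + t) - f m)| + |t * (f (m + δ₁) + f (m + t))| := abs_sub _ _
          _ = δ₁ * |f (m + t) - f m| + |t| * |f (m + δ₁) + f (m + t)| := by
              rw [abs_mul, abs_mul, abs_of_pos hδ₁]
      have h5 : |f (m + δ₁) + f (m + t)| ≤ 2 * B := by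
        calc |f (m + δ₁) + f (m + t)| ≤ |f (m + δ₁)| + |f (m + t)| := abs_add_le _ _
          _ ≤ 2 * B := by linarith
      have h6 : δ₁ * |f (m + t) - f m| ≤ L * |t| := by
        nlinarith [abs_nonneg (f (m + t) - f m), abs_nonneg t]
      nlinarith [abs_nonneg t, mul_le_mul_of_nonneg_left h5 (abs_nonneg t)]
    calc |C₀ + Etr + Eint| ≤ |C₀| + |Etr| + |Eint| := abs_add_three _ _ _
      _ ≤ C₀ + (L + 2 * B) / 2 * |t| + B * |t| := by
          rw [abs_of_nonneg hC₀l]; linarith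
      _ ≤ C₀ + K * |t| := by
          rw [hK_def]; nlinarith [abs_nonneg t]
  -- choose d₂ and d₃
  have h6K : (0:ℝ) < 6 * K := by linarith
  have hDεK : (0:ℝ) < D * ε / (6 * K) := div_pos (mul_pos hD hε) h6K
  refine ⟨min δ₀ (D * ε / (6 * K)), lt_min hδ₀ hDεK, ?_⟩
  intro δ₂ hδ₂ hδ₂d
  have hδ₂δ₀ : δ₂ ≤ δ₀ := le_of_lt (lt_of_lt_of_le hδ₂d (min_le_left _ _))
  have hδ₂ε : δ₂ < D * ε / (6 * K) := lt_of_lt_of_le hδ₂d (min_le_right _ _)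
  refine ⟨min δ₀ (D * ε / (6 * K)), lt_min hδ₀ hDεK, ?_⟩
  intro δ hδ hδd a ha b hb
  have hδδ₀ : δ ≤ δ₀ := le_of_lt (lt_of_lt_of_le hδd (min_le_left _ _))
  have hδε : δ < D * ε / (6 * K) := lt_of_lt_of_le hδd (min_le_right _ _)
  have haδ : |a| ≤ δ := abs_le.mpr ⟨ha.1, ha.2⟩
  have hbδ : |b| ≤ δ := abs_le.mpr ⟨hb.1, hb.2⟩
  have hmb : m + b ∈ Icc (-1:ℝ) 1 := hmem b (le_trans hbδ hδδ₀)
  have hmδ₂ : m - δ₂ ∈ Icc (-1:ℝ) 1 := by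
    have := hmem (-δ₂) (by rw [abs_neg, abs_of_pos hδ₂]; exact hδ₂δ₀)
    rwa [show m + -δ₂ = m - δ₂ by ring] at this
  -- term 1
  have hT1 : |((δ₁ - a) / 2) * (f (m + δ₁) + f (m + a)) - ∫ v in (m + a)..(m + δ₁), f v|
      ≤ C₀ + K * δ := by
    calc _ ≤ C₀ + K * |a| := keybound a (le_trans haδ hδδ₀)
      _ ≤ C₀ + K * δ := by nlinarith
  -- term 3
  have hT3 : |((δ₁ + δ₂) / 2) * (f (m + δ₁) + f (m - δ₂)) - ∫ v in (m - δ₂)..(m + δ₁), f v|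
      ≤ C₀ + K * δ₂ := by
    have := keybound (-δ₂) (by rw [abs_neg, abs_of_pos hδ₂]; exact hδ₂δ₀)
    rw [show m + -δ₂ = m - δ₂ by ring, show δ₁ - -δ₂ = δ₁ + δ₂ by ring,
      abs_neg, abs_of_pos hδ₂] at this
    exact this
  -- term 2 (crude bound)
  have hT2 : |((b + δ₂) / 2) * (f (m + b) + f (m - δ₂)) - ∫ v in (m - δ₂)..(m + b), f v|
      ≤ K * (δ + δ₂) := by
    have h1 : |((b + δ₂) / 2) * (f (m + b) + f (m - δ₂))| ≤ (|b| + δ₂) * B := by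
      rw [abs_mul, abs_div, abs_of_pos (by norm_num : (0:ℝ) < 2)]
      have hb2 : |b + δ₂| ≤ |b| + δ₂ := by
        calc |b + δ₂| ≤ |b| + |δ₂| := abs_add_le _ _
          _ = |b| + δ₂ := by rw [abs_of_pos hδ₂]
      have hfb : |f (m + b) + f (m - δ₂)| ≤ 2 * B := by
        calc |f (m + b) + f (m - δ₂)| ≤ |f (m + b)| + |f (m - δ₂)| := abs_add_le _ _
          _ ≤ 2 * B := by linarith [hB' _ hmb, hB' _ hmδ₂]
      nlinarith [abs_nonneg (b + δ₂), abs_nonneg (f (m + b) + f (m - δ₂)), abs_nonneg b]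
    have h2 : |∫ v in (m - δ₂)..(m + b), f v| ≤ B * (|b| + δ₂) := by
      have := hIB (m - δ₂) hmδ₂ (m + b) hmb
      rw [show m + b - (m - δ₂) = b + δ₂ by ring] at this
      have hb2 : |b + δ₂| ≤ |b| + δ₂ := by
        calc |b + δ₂| ≤ |b| + |δ₂| := abs_add_le _ _
          _ = |b| + δ₂ := by rw [abs_of_pos hδ₂]
      nlinarith
    calc |((b + δ₂) / 2) * (f (m + b) + f (m - δ₂)) - ∫ v in (m - δ₂)..(m + b), f v|
        ≤ |((b + δ₂) / 2) * (f (m + b) + f (m - δ₂))| + |∫ v in (m - δ₂)..(m + b), f v| :=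
          abs_sub _ _
      _ ≤ (|b| + δ₂) * B + B * (|b| + δ₂) := by linarith
      _ ≤ K * (δ + δ₂) := by rw [hK_def]; nlinarith [abs_nonneg b, hδ.le, hδ₂.le]
  -- final estimate
  rw [show (f (m + δ₁) - f m) / δ₁ - fm = D from hD_def.symm, div_lt_iff₀ hD]
  have hC₀δ : C₀ ≤ D * δ₁ / 2 := by
    have h := mul_nonneg (mul_nonneg hD.le hδ₁.le) (by linarith : (0:ℝ) ≤ 1 - δ₁)
    nlinarith [hC₀u, h]
  have h1 : K * δ < D * ε / 6 := by
    rw [lt_div_iff₀ h6K] at hδε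
    linarith
  have h2 : K * δ₂ < D * ε / 6 := by
    rw [lt_div_iff₀ h6K] at hδ₂ε
    linarith
  linarith [hT1, hT2, hT3, hC₀δ, h1, h2, mul_lt_mul_of_pos_left hδ₁ε hD]
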